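/- Let F_q be a finite field of odd characteristic, let D ∈ F_q be a nonzero element that is not a square in F_q, and let α ∈ F_q with α ≠ 0. Define polynomials a(x) = 2αx − α² − D, b(x) = 2αx² + (−3α² − D)x + α³ + Dα, c(x) = (−α² − D)x² + (α³ + Dα)x − α⁴/4 − Dα²/2 + 3D²/4, and Δ(x) = b(x)² − 4a(x)c(x) in F_q[x]. Assume there exists x1 ∈ F_q such that (i) D − x1² is a nonzero square in F_q, (ii) a(x1) ≠ 0, and (iii) Δ(x1) is a nonzero square in F_q. Then there exist x2, x3, y1, y2, y3 ∈ F_q such that x1 + x2 + x3 = α, y1 + y2 + y3 = 0, x1² + y1² = D, x2² + y2² = D, and x3² + y3² = D. -/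

import Mathlib

/-- Finite field of odd characteristic, `D` a nonzero non-square, `α ≠ 0`. With
`a(x) = 2αx − α² − D`, `b(x) = 2αx² + (−3α² − D)x + α³ + Dα`,
`c(x) = (−α² − D)x² + (α³ + Dα)x − α⁴/4 − Dα²/2 + 3D²/4` and `Δ = b² − 4ac`:
if there is `x1` with `D − x1²` a nonzero square, `a(x1) ≠ 0` and `Δ(x1)` a
nonzero square, then the system of the odd case is solvable. -/
theorem system_odd_solvable_of_discriminant (F : Type*) [Field F] [Fintype F]
    (hchar : ringChar F ≠ 2) (D : F) (hD0 : D ≠ 0) (hDns : ¬ ∃ w : F, D = w ^ 2)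
    (α : F) (hα : α ≠ 0) (x1 : F)
    (h1 : D - x1 ^ 2 ≠ 0 ∧ ∃ w : F, D - x1 ^ 2 = w ^ 2)
    (h2 : 2 * α * x1 - α ^ 2 - D ≠ 0)
    (h3 : (2 * α * x1 ^ 2 + (-3 * α ^ 2 - D) * x1 + α ^ 3 + D * α) ^ 2 -
        4 * (2 * α * x1 - α ^ 2 - D) *
          ((-α ^ 2 - D) * x1 ^ 2 + (α ^ 3 + D * α) * x1
            - α ^ 4 / 4 - D * α ^ 2 / 2 + 3 * D ^ 2 / 4) ≠ 0 ∧
      ∃ w : F, (2 * α * x1 ^ 2 + (-3 * α ^ 2 - D) * x1 + α ^ 3 + D * α) ^ 2 -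
        4 * (2 * α * x1 - α ^ 2 - D) *
          ((-α ^ 2 - D) * x1 ^ 2 + (α ^ 3 + D * α) * x1
            - α ^ 4 / 4 - D * α ^ 2 / 2 + 3 * D ^ 2 / 4) = w ^ 2) :
    ∃ x2 x3 y1 y2 y3 : F,
      x1 + x2 + x3 = α ∧ y1 + y2 + y3 = 0 ∧
      x1 ^ 2 + y1 ^ 2 = D ∧ x2 ^ 2 + y2 ^ 2 = D ∧ x3 ^ 2 + y3 ^ 2 = D := by
  obtain ⟨hne1, w1, hw1⟩ := h1
  obtain ⟨hΔ, w, hw⟩ := h3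
  have h2ne : (2 : F) ≠ 0 := by
    simpa using Ring.two_ne_zero hchar
  have h4ne : (4 : F) ≠ 0 := by
    have := mul_ne_zero h2ne h2ne
    norm_num at this ⊢
    exact this
  have hw1ne : w1 ≠ 0 := by
    intro h; apply hne1; rw [hw1, h]; ring
  -- abbreviations (purely notational; bodies have no division by 4)
  have h4c : (4 : F) * (- α ^ 4 / 4 - D * α ^ 2 / 2 + 3 * D ^ 2 / 4)
      = -α ^ 4 - 2 * D * α ^ 2 + 3 * D ^ 2 := by
    field_simp
    ring
  -- denominator-free discriminant relation:
  -- B^2 - A*C = w^2 with C = 4*c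
  have hw'' : (2 * α * x1 ^ 2 + (-3 * α ^ 2 - D) * x1 + α ^ 3 + D * α) ^ 2
      - (2 * α * x1 - α ^ 2 - D) *
        ((-4 * α ^ 2 - 4 * D) * x1 ^ 2 + (4 * α ^ 3 + 4 * D * α) * x1
          - α ^ 4 - 2 * D * α ^ 2 + 3 * D ^ 2) = w ^ 2 := by
    linear_combination hw + (2 * α * x1 - α ^ 2 - D) * h4c
  -- choose x2 as a root of the quadratic
  obtain ⟨x2, hu⟩ : ∃ x2 : F,
      2 * (2 * α * x1 - α ^ 2 - D) * x2
        = -(2 * α * x1 ^ 2 + (-3 * α ^ 2 - D) * x1 + α ^ 3 + D * α) + w :=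
    ⟨(-(2 * α * x1 ^ 2 + (-3 * α ^ 2 - D) * x1 + α ^ 3 + D * α) + w)
        / (2 * (2 * α * x1 - α ^ 2 - D)), by
      exact mul_div_cancel₀ _ (mul_ne_zero h2ne h2)⟩
  -- the quadratic relation (multiplied by 4A)
  have hQ : 4 * (2 * α * x1 - α ^ 2 - D) ^ 2 * x2 ^ 2
      + 4 * (2 * α * x1 - α ^ 2 - D)
          * (2 * α * x1 ^ 2 + (-3 * α ^ 2 - D) * x1 + α ^ 3 + D * α) * x2
      + (2 * α * x1 - α ^ 2 - D) *
          ((-4 * α ^ 2 - 4 * D) * x1 ^ 2 + (4 * α ^ 3 + 4 * D * α) * x1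
            - α ^ 4 - 2 * D * α ^ 2 + 3 * D ^ 2) = 0 := by
    linear_combination
      (2 * (2 * α * x1 - α ^ 2 - D) * x2 + w
        + (2 * α * x1 ^ 2 + (-3 * α ^ 2 - D) * x1 + α ^ 3 + D * α)) * hu - hw''
  -- key square relation
  have hSA : (2 * α * x1 - α ^ 2 - D) *
      ((x1 ^ 2 + x2 ^ 2 - (α - x1 - x2) ^ 2 - D) ^ 2
        - 4 * (D - x1 ^ 2) * (D - x2 ^ 2)) = 0 := by
    linear_combination -hQ
  have hS : (x1 ^ 2 + x2 ^ 2 - (α - x1 - x2) ^ 2 - D) ^ 2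
      = 4 * (D - x1 ^ 2) * (D - x2 ^ 2) := by
    rcases mul_eq_zero.mp hSA with h | h
    · exact absurd h h2
    · linear_combination h
  -- choose y2
  obtain ⟨y2, hy2⟩ : ∃ y2 : F,
      2 * w1 * y2 = x1 ^ 2 + x2 ^ 2 - (α - x1 - x2) ^ 2 - D :=
    ⟨(x1 ^ 2 + x2 ^ 2 - (α - x1 - x2) ^ 2 - D) / (2 * w1), by field_simp⟩
  have h40 : 4 * w1 ^ 2 * (x2 ^ 2 + y2 ^ 2 - D) = 0 := by
    linear_combination
      (2 * w1 * y2 + (x1 ^ 2 + x2 ^ 2 - (α - x1 - x2) ^ 2 - D)) * hy2 + hS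
        + 4 * (D - x2 ^ 2) * hw1
  have h4g : x2 ^ 2 + y2 ^ 2 = D := by
    have h4w : 4 * w1 ^ 2 ≠ 0 := mul_ne_zero h4ne (pow_ne_zero 2 hw1ne)
    have := (mul_eq_zero.mp h40).resolve_left h4w
    linear_combination this
  refine ⟨x2, α - x1 - x2, w1, y2, -(w1 + y2), by ring, by ring,
    by linear_combination -hw1, h4g, by linear_combination hy2 + h4g - hw1⟩
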